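/- Let r, p' ≥ 1 and let B_r be the r×r matrix with every row equal to (−2, 2, −2, 2, …). The block matrix [[ c·B_r , p'·c·B_r ], [ −E_r , 0 ]] (of size 2r×2r, with c = m p' + α' any positive integer) is ℤ-equivalent to (p'·c·B_r) ⊕ E_r-block structure, and hence ℤ-equivalent to diag(2 p' c, 0^{(r−1)}, 1^{(r)}). -/

import Mathlib

open Matrix Finset

namespace BlockZEquivAux

/-- row-operation matrix: subtract row 0 from every other row -/
def P (r : ℕ) : Matrix (Fin r) (Fin r) ℤ :=
  Matrix.of fun i k => if i = k then 1 else if (k : ℕ) = 0 then -1 else 0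

/-- column-operation matrix -/
def Q (r : ℕ) : Matrix (Fin r) (Fin r) ℤ :=
  Matrix.of fun k j =>
    if k = j then (if (j : ℕ) = 0 then -1 else 1)
    else if (k : ℕ) + 1 = (j : ℕ) then 1 else 0

def Bm (r : ℕ) : Matrix (Fin r) (Fin r) ℤ :=
  Matrix.of fun _ j => (-1 : ℤ) ^ ((j : ℕ) + 1) * 2

lemma P_rowsum {r : ℕ} (hr : 0 < r) (i : Fin r) :
    ∑ k : Fin r, P r i k = if (i : ℕ) = 0 then 1 else 0 := by
  set z : Fin r := ⟨0, hr⟩ with hz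
  have key : ∀ k : Fin r, P r i k =
      (if k = i then (1 : ℤ) else 0) + (if k = z then (if i = z then 0 else -1) else 0) := by
    intro k
    simp only [P, Matrix.of_apply, hz, Fin.ext_iff]
    by_cases h1 : i = k <;> by_cases h2 : (k : ℕ) = 0 <;>
      simp_all [Fin.ext_iff] <;> omega
  rw [Finset.sum_congr rfl fun k _ => key k, Finset.sum_add_distrib,
    Finset.sum_ite_eq', Finset.sum_ite_eq']
  simp only [Finset.mem_univ, if_true]
  by_cases h : i = z
  · subst h; simp [hz]
  · have : (i : ℕ) ≠ 0 := by
      intro h0; exact h (by simp [hz, Fin.ext_iff, h0])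
    simp [this, h]

lemma P_mul_B {r : ℕ} (hr : 0 < r) :
    P r * Bm r = Matrix.of fun (i j : Fin r) =>
      if (i : ℕ) = 0 then (-1 : ℤ) ^ ((j : ℕ) + 1) * 2 else 0 := by
  ext i j
  rw [Matrix.mul_apply]
  have : ∀ k : Fin r, P r i k * Bm r k j = P r i k * ((-1 : ℤ) ^ ((j : ℕ) + 1) * 2) :=
    fun k => rfl
  rw [Finset.sum_congr rfl fun k _ => this k, ← Finset.sum_mul, P_rowsum hr]
  by_cases h : (i : ℕ) = 0 <;> simp [h]

lemma vQ {r : ℕ} (j : Fin r) :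
    ∑ l : Fin r, ((-1 : ℤ) ^ ((l : ℕ) + 1) * 2) * Q r l j
      = if (j : ℕ) = 0 then 2 else 0 := by
  by_cases hj : (j : ℕ) = 0
  · have key : ∀ l : Fin r, ((-1 : ℤ) ^ ((l : ℕ) + 1) * 2) * Q r l j =
        if l = j then -((-1 : ℤ) ^ ((j : ℕ) + 1) * 2) else 0 := by
      intro l
      simp only [Q, Matrix.of_apply]
      by_cases h1 : l = j
      · subst h1; simp [hj]
      · have : ¬ ((l : ℕ) + 1 = (j : ℕ)) := by omega
        simp [h1, this]
    rw [Finset.sum_congr rfl fun l _ => key l, Finset.sum_ite_eq']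
    simp [hj]
  · set j' : Fin r := ⟨(j : ℕ) - 1, by omega⟩ with hj'
    have hjj' : j' ≠ j := by simp [hj', Fin.ext_iff]; omega
    have key : ∀ l : Fin r, ((-1 : ℤ) ^ ((l : ℕ) + 1) * 2) * Q r l j =
        (if l = j then ((-1 : ℤ) ^ ((j : ℕ) + 1) * 2) else 0)
        + (if l = j' then ((-1 : ℤ) ^ ((l : ℕ) + 1) * 2) else 0) := by
      intro l
      have h2 : ((l : ℕ) + 1 = (j : ℕ)) ↔ l = j' := by
        simp [hj', Fin.ext_iff]; omega
      simp only [Q, Matrix.of_apply]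
      by_cases h1 : l = j
      · subst h1
        have hne : l ≠ j' := fun h => hjj' h.symm
        rw [if_pos rfl, if_neg hj, if_pos rfl, if_neg hne]
        ring
      · rw [if_neg h1, if_neg h1]
        by_cases h3 : l = j'
        · have hlj : (l : ℕ) + 1 = (j : ℕ) := h2.mpr h3
          rw [if_pos hlj, if_pos h3]
          ring
        · have hnlj : ¬ ((l : ℕ) + 1 = (j : ℕ)) := fun h => h3 (h2.mp h)
          rw [if_neg hnlj, if_neg h3]
          ring
    rw [Finset.sum_congr rfl fun l _ => key l, Finset.sum_add_distrib,
      Finset.sum_ite_eq', Finset.sum_ite_eq']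
    simp only [Finset.mem_univ, if_true, hj, if_false]
    have : (j' : ℕ) + 1 = (j : ℕ) := by simp [hj']; omega
    rw [this, pow_succ]
    ring

lemma PBQ {r : ℕ} (hr : 0 < r) :
    P r * Bm r * Q r =
      Matrix.diagonal (fun i : Fin r => if (i : ℕ) = 0 then (2 : ℤ) else 0) := by
  rw [P_mul_B hr]
  ext i j
  rw [Matrix.mul_apply]
  simp only [Matrix.of_apply]
  by_cases h : (i : ℕ) = 0
  · simp only [h, if_true]
    rw [vQ]
    by_cases h2 : (j : ℕ) = 0
    · have hij : i = j := Fin.ext (by omega)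
      rw [hij]
      simp [Matrix.diagonal_apply_eq, h2]
    · have h4 : i ≠ j := fun e => h2 (by rw [← e]; exact h)
      simp [Matrix.diagonal_apply_ne _ h4, h2]
  · simp only [h, if_false, zero_mul, Finset.sum_const_zero]
    rcases eq_or_ne i j with rfl | h4
    · simp [Matrix.diagonal_apply_eq, h]
    · simp [Matrix.diagonal_apply_ne _ h4]

lemma P_triangular {r : ℕ} : (P r).BlockTriangular OrderDual.toDual := by
  intro i j h
  have : i < j := h
  have h1 : i ≠ j := ne_of_lt this
  have h2 : (j : ℕ) ≠ 0 := by
    have := Fin.lt_iff_val_lt_val.mp this; omega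
  simp [P, h1, h2]

lemma Q_triangular {r : ℕ} : (Q r).BlockTriangular id := by
  intro i j h
  have : j < i := h
  have h1 : i ≠ j := (ne_of_lt this).symm
  have h2 : ¬ ((i : ℕ) + 1 = (j : ℕ)) := by
    have := Fin.lt_iff_val_lt_val.mp this; omega
  simp [Q, h1, h2]

lemma isUnit_detP {r : ℕ} : IsUnit (P r).det := by
  rw [Matrix.det_of_lowerTriangular _ P_triangular]
  simp [P]

lemma isUnit_detQ {r : ℕ} : IsUnit (Q r).det := by
  rw [Matrix.det_of_upperTriangular Q_triangular]
  have : ∀ i : Fin r, Q r i i = if (i : ℕ) = 0 then -1 else 1 := by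
    intro i; simp [Q]
  rw [Finset.prod_congr rfl fun i _ => this i]
  apply IsUnit.of_mul_eq_one (∏ i : Fin r, (if (i : ℕ) = 0 then (-1 : ℤ) else 1))
  rw [← Finset.prod_mul_distrib]
  apply Finset.prod_eq_one
  intro i _
  by_cases h : (i : ℕ) = 0 <;> simp [h]

end BlockZEquivAux

open BlockZEquivAux in
/-- Let `r, p' ≥ 1`, let `B` be the `r × r` matrix with every row `(-2, 2, -2, 2, …)`,
and let `c` be a positive integer.  The `2r × 2r` block matrix
`[[ c·B , p'·c·B ], [ -E , 0 ]]` is `ℤ`-equivalent to the diagonal matrix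
`diag(2 p' c, 0^{(r-1)}, 1^{(r)})`. -/
theorem block_matrix_ZEquiv_diag'
    (r : ℕ) (hr : 0 < r) (p' c : ℤ) (hp' : 1 ≤ p') (hc : 0 < c)
    (B : Matrix (Fin r) (Fin r) ℤ)
    (hB : B = Matrix.of fun (_ j : Fin r) => (-1 : ℤ) ^ ((j : ℕ) + 1) * 2) :
    ∃ U V : Matrix (Fin r ⊕ Fin r) (Fin r ⊕ Fin r) ℤ,
      IsUnit U.det ∧ IsUnit V.det ∧
      U * Matrix.fromBlocks (c • B) ((p' * c) • B) (-1) 0 * V =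
        Matrix.diagonal (Sum.elim
          (fun (i : Fin r) => if (i : ℕ) = 0 then 2 * p' * c else 0)
          (fun (_ : Fin r) => 1)) := by
  have hBm : B = Bm r := hB
  refine ⟨Matrix.fromBlocks (P r) (P r * (c • B)) 0 (-1),
    Matrix.fromBlocks 0 1 (Q r) 0, ?_, ?_, ?_⟩
  · rw [Matrix.det_fromBlocks_zero₂₁]
    apply IsUnit.mul isUnit_detP
    rw [show (-1 : Matrix (Fin r) (Fin r) ℤ) = -(1 : Matrix (Fin r) (Fin r) ℤ) from rfl,
      Matrix.det_neg]
    simp only [Matrix.det_one, mul_one]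
    exact IsUnit.pow (Fintype.card (Fin r)) (isUnit_one.neg : IsUnit (-1 : ℤ))
  · set S : Matrix (Fin r ⊕ Fin r) (Fin r ⊕ Fin r) ℤ :=
      Matrix.fromBlocks 0 1 1 0 with hSdef
    have hS : S * S = 1 := by
      rw [hSdef, Matrix.fromBlocks_multiply]
      simp [← Matrix.fromBlocks_one]
    have hV : (Matrix.fromBlocks 0 1 (Q r) 0 :
        Matrix (Fin r ⊕ Fin r) (Fin r ⊕ Fin r) ℤ) =
        S * (Matrix.fromBlocks (Q r) 0 0 1) := by
      rw [hSdef, Matrix.fromBlocks_multiply]; simp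
    rw [hV, Matrix.det_mul, Matrix.det_fromBlocks_zero₂₁, Matrix.det_one]
    exact ((Matrix.isUnit_det_of_right_inverse hS).mul (by simpa using isUnit_detQ))
  · have key : P r * ((p' * c) • B) * Q r =
        Matrix.diagonal (fun i : Fin r => if (i : ℕ) = 0 then 2 * p' * c else 0) := by
      rw [hBm, Matrix.mul_smul, Matrix.smul_mul, PBQ hr]
      ext i j
      rcases eq_or_ne i j with rfl | h4
      · simp only [Matrix.smul_apply, Matrix.diagonal_apply_eq, smul_eq_mul]
        by_cases h : (i : ℕ) = 0
        · rw [if_pos h, if_pos h]; ring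
        · rw [if_neg h, if_neg h]; ring
      · simp [Matrix.diagonal_apply_ne _ h4]
    rw [Matrix.fromBlocks_multiply, Matrix.fromBlocks_multiply,
      ← Matrix.fromBlocks_diagonal]
    simp only [Matrix.mul_zero, Matrix.zero_mul, Matrix.mul_one, Matrix.one_mul,
      Matrix.mul_neg, Matrix.neg_mul, neg_neg, add_zero, zero_add, neg_zero,
      Matrix.diagonal_one, mul_neg_one, add_neg_cancel]
    rw [key]
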